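/- arXiv:2308.14856 — 2 statements merged into one kernel-verified Lean document; each statement's English description precedes it below -/
import Mathlib

section
/- Let J : [0,R] → ℝ be a C² function satisfying J''(r) + K(r)·J(r) = 0 with J(0) = 0, J'(0) = 1, where K : [0,R] → ℝ is continuous with 0 ≤ K(r) ≤ K̃ for a constant K̃ > 0. Suppose additionally that J(r) ≤ M·r on [0,R] for some constant M > 1, and that R² · K̃ · M < 1. Then J'(r) > 0 for all r ∈ [0,R], and in particular J(r) > 0 for all r ∈ (0,R]. -/
open Set

/-- Jacobi field in bounded positive curvature: if `J'' + K J = 0` with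
`J 0 = 0`, `J' 0 = 1`, `0 ≤ K ≤ K̃`, `J r ≤ M r`, `M > 1` and `R² K̃ M < 1`,
then `J' > 0` on `[0,R]` and `J > 0` on `(0,R]`. -/
theorem jacobi_small_positive_curvature (R : ℝ) (hR : 0 < R)
    (J J' K : ℝ → ℝ) (Ktilde M : ℝ)
    (hKt : 0 < Ktilde) (hM : 1 < M)
    (hK : ContinuousOn K (Icc 0 R))
    (hKbound : ∀ r ∈ Icc 0 R, 0 ≤ K r ∧ K r ≤ Ktilde)
    (hJ : ∀ r ∈ Icc 0 R, HasDerivAt J (J' r) r)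
    (hJ' : ∀ r ∈ Icc 0 R, HasDerivAt J' (-(K r * J r)) r)
    (hJ0 : J 0 = 0) (hJ'0 : J' 0 = 1)
    (hJle : ∀ r ∈ Icc 0 R, J r ≤ M * r)
    (hsmall : R ^ 2 * Ktilde * M < 1) :
    (∀ r ∈ Icc 0 R, 0 < J' r) ∧ ∀ r ∈ Ioc 0 R, 0 < J r := by
  have hM0 : 0 < M := lt_trans one_pos hM
  -- auxiliary function h r = J' r + K̃ M / 2 * r ^ 2
  set h : ℝ → ℝ := fun r => J' r + Ktilde * M / 2 * r ^ 2 with hh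
  have hhd : ∀ r ∈ Icc 0 R, HasDerivAt h (-(K r * J r) + Ktilde * M * r) r := by
    intro r hr
    have : HasDerivAt (fun r : ℝ => Ktilde * M / 2 * r ^ 2) (Ktilde * M / 2 * (2 * r)) r := by
      have := (hasDerivAt_pow 2 r).const_mul (Ktilde * M / 2)
      simpa using this
    have h2 : Ktilde * M / 2 * (2 * r) = Ktilde * M * r := by ring
    rw [h2] at this
    exact (hJ' r hr).add this
  have hderiv_nonneg : ∀ r ∈ interior (Icc (0:ℝ) R), 0 ≤ -(K r * J r) + Ktilde * M * r := by
    intro r hr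
    rw [interior_Icc] at hr
    have hrI : r ∈ Icc (0:ℝ) R := Ioo_subset_Icc_self hr
    have hK0 := (hKbound r hrI).1
    have hKle := (hKbound r hrI).2
    have hr0 : 0 ≤ r := le_of_lt hr.1
    have key : K r * J r ≤ Ktilde * M * r := by
      rcases le_or_gt (J r) 0 with hJr | hJr
      · have h1 : K r * J r ≤ 0 := mul_nonpos_of_nonneg_of_nonpos hK0 hJr
        have h2 : 0 ≤ Ktilde * M * r := by positivity
        linarith
      · have h1 : K r * J r ≤ Ktilde * J r :=
          mul_le_mul_of_nonneg_right hKle (le_of_lt hJr)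
        have h2 : Ktilde * (J r) ≤ Ktilde * (M * r) :=
          mul_le_mul_of_nonneg_left (hJle r hrI) (le_of_lt hKt)
        nlinarith
    linarith
  have hcont : ContinuousOn h (Icc 0 R) := fun r hr => (hhd r hr).continuousAt.continuousWithinAt
  have hmono : MonotoneOn h (Icc 0 R) := by
    apply monotoneOn_of_deriv_nonneg (convex_Icc 0 R) hcont
    · intro r hr
      rw [interior_Icc] at hr
      exact ((hhd r (Ioo_subset_Icc_self hr)).differentiableAt).differentiableWithinAt
    · intro r hr
      have hr2 := hr
      rw [interior_Icc] at hr2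
      rw [(hhd r (Ioo_subset_Icc_self hr2)).deriv]
      exact hderiv_nonneg r hr
  have h0 : h 0 = 1 := by simp [hh, hJ'0]
  have hJ'pos : ∀ r ∈ Icc 0 R, 0 < J' r := by
    intro r hr
    have h0mem : (0:ℝ) ∈ Icc (0:ℝ) R := ⟨le_refl _, le_of_lt hR⟩
    have hge : (1:ℝ) ≤ h r := by
      rw [← h0]; exact hmono h0mem hr hr.1
    have hr2 : r ^ 2 ≤ R ^ 2 := by nlinarith [hr.1, hr.2]
    have hle2 : Ktilde * M / 2 * r ^ 2 ≤ Ktilde * M / 2 * R ^ 2 := by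
      apply mul_le_mul_of_nonneg_left hr2; positivity
    have hlt : Ktilde * M / 2 * R ^ 2 < 1 / 2 := by nlinarith
    have heq : h r = J' r + Ktilde * M / 2 * r ^ 2 := by rw [hh]
    clear_value h
    linarith
  refine ⟨hJ'pos, ?_⟩
  have hJcont : ContinuousOn J (Icc 0 R) :=
    fun r hr => (hJ r hr).continuousAt.continuousWithinAt
  have hJmono : StrictMonoOn J (Icc 0 R) := by
    apply strictMonoOn_of_deriv_pos (convex_Icc 0 R) hJcont
    intro r hr
    rw [interior_Icc] at hr
    have hrI : r ∈ Icc (0:ℝ) R := Ioo_subset_Icc_self hr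
    rw [(hJ r hrI).deriv]
    exact hJ'pos r hrI
  intro r hr
  have h0mem : (0:ℝ) ∈ Icc (0:ℝ) R := ⟨le_refl _, le_of_lt hR⟩
  have := hJmono h0mem ⟨le_of_lt hr.1, hr.2⟩ hr.1
  rwa [hJ0] at this
end

section
/- Let α : [-L,L] → S² be a unit-speed C² spherical curve with geodesic curvature κ and λ ∈ (π/2,π), and let β(s) = α(s)cos λ + N_α(s)sin λ with N_α = α × α'. Assume 0 ≤ κ(s) < −tan λ for all s. Then the geodesic curvature of β (with respect to its arc-length parametrization and with normal N_β(s) = α(s)sin λ − N_α(s)cos λ) is κ_β(s) = −(sin λ + κ(s)cos λ)/(cos λ − κ(s)sin λ), and κ_β(s) > 0 for all s. -/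
open Set Real
open scoped RealInnerProductSpace

/-- The cross product on `ℝ³` viewed as `EuclideanSpace ℝ (Fin 3)`. -/
noncomputable def cross3 (x y : EuclideanSpace ℝ (Fin 3)) : EuclideanSpace ℝ (Fin 3) :=
  (WithLp.equiv 2 (Fin 3 → ℝ)).symm
    ![x 1 * y 2 - x 2 * y 1, x 2 * y 0 - x 0 * y 2, x 0 * y 1 - x 1 * y 0]

lemma inner3 (x y : EuclideanSpace ℝ (Fin 3)) : ⟪x,y⟫ = x 0 * y 0 + x 1 * y 1 + x 2 * y 2 := by
  simp [PiLp.inner_apply, Fin.sum_univ_three, RCLike.inner_apply]; ring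

lemma cross3_zero (x y : EuclideanSpace ℝ (Fin 3)) : cross3 x y 0 = x 1 * y 2 - x 2 * y 1 := by
  simp [cross3]
lemma cross3_one (x y : EuclideanSpace ℝ (Fin 3)) : cross3 x y 1 = x 2 * y 0 - x 0 * y 2 := by
  simp [cross3]
lemma cross3_two (x y : EuclideanSpace ℝ (Fin 3)) : cross3 x y 2 = x 0 * y 1 - x 1 * y 0 := by
  simp [cross3]

lemma triple (u a v : EuclideanSpace ℝ (Fin 3)) :
    cross3 u (cross3 a v) = ⟪u,v⟫ • a - ⟪u,a⟫ • v := by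
  ext i
  fin_cases i <;>
    simp [cross3_zero, cross3_one, cross3_two, inner3, Fin.sum_univ_three] <;> ring

lemma lagrange (x y : EuclideanSpace ℝ (Fin 3)) :
    ⟪x,x⟫ * ⟪y,y⟫ = ⟪x,y⟫^2 + ⟪cross3 x y, cross3 x y⟫ := by
  simp only [inner3, cross3_zero, cross3_one, cross3_two]; ring

lemma cross3_inner_left (a v : EuclideanSpace ℝ (Fin 3)) : ⟪cross3 a v, a⟫ = 0 := by
  rw [inner3, cross3_zero, cross3_one, cross3_two]; ring

lemma cross3_inner_right (a v : EuclideanSpace ℝ (Fin 3)) : ⟪cross3 a v, v⟫ = 0 := by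
  rw [inner3, cross3_zero, cross3_one, cross3_two]; ring

lemma key (a v w : EuclideanSpace ℝ (Fin 3)) (haa : ⟪a,a⟫ = 1) (hvv : ⟪v,v⟫ = 1)
    (hav : ⟪a,v⟫ = 0) (hvw : ⟪v,w⟫ = 0) (haw : ⟪a,w⟫ = -1) :
    cross3 a w = (-⟪w, cross3 a v⟫) • v := by
  set N := cross3 a v with hNdef
  set k := ⟪w, N⟫ with hkdef
  have hNa : ⟪N, a⟫ = 0 := cross3_inner_left a v
  have hNv : ⟪N, v⟫ = 0 := cross3_inner_right a v
  have hNN : ⟪N, N⟫ = 1 := by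
    have h := lagrange a v
    rw [haa, hvv, hav] at h
    rw [hNdef]; linarith
  set u : EuclideanSpace ℝ (Fin 3) := w + a - k • N with hu
  have hua : ⟪u, a⟫ = 0 := by
    rw [hu, inner_sub_left, inner_add_left, real_inner_smul_left, hNa,
      real_inner_comm a w, haw, haa]; ring
  have huv : ⟪u, v⟫ = 0 := by
    rw [hu, inner_sub_left, inner_add_left, real_inner_smul_left, hNv,
      real_inner_comm v w, hvw, hav]; ring
  have huN : ⟪u, N⟫ = 0 := by
    rw [hu, inner_sub_left, inner_add_left, real_inner_smul_left, hNN, ← hkdef,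
      real_inner_comm N a, hNa]; ring
  have hcross : cross3 u N = 0 := by
    rw [hNdef, triple, huv, hua]; simp
  have huu : ⟪u, u⟫ = 0 := by
    have h := lagrange u N
    rw [hNN, huN, hcross] at h
    simpa using h
  have hu0 : u = 0 := inner_self_eq_zero.mp huu
  have hw : w = k • N - a := by
    have h0 : w + a - k • N = 0 := by rw [← hu]; exact hu0
    have h1 := sub_eq_zero.mp h0
    rw [← h1]; abel
  rw [hw]
  have h1 : cross3 a (k • N - a) = k • cross3 a N - cross3 a a := by
    ext i; fin_cases i <;> simp [cross3_zero, cross3_one, cross3_two] <;> ring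
  have h2 : cross3 a a = 0 := by
    ext i; fin_cases i <;> simp [cross3_zero, cross3_one, cross3_two] <;> ring
  have h3 : cross3 a N = -v := by
    rw [hNdef, triple, hav, haa]; simp
  rw [h1, h2, h3]
  simp

/-- components determine a derivative in `EuclideanSpace ℝ (Fin 3)`. -/
lemma build_hasDerivAt (f : ℝ → EuclideanSpace ℝ (Fin 3)) (v : EuclideanSpace ℝ (Fin 3)) (t : ℝ)
    (h : ∀ i, HasDerivAt (fun r => f r i) (v i) t) : HasDerivAt f v t := by
  set e := PiLp.continuousLinearEquiv 2 ℝ (fun _ : Fin 3 => ℝ) with he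
  have h2 : HasDerivAt (fun r => e (f r)) (e v) t := hasDerivAt_pi.2 h
  have h3 := ((e.symm : (Fin 3 → ℝ) →L[ℝ] EuclideanSpace ℝ (Fin 3)).hasFDerivAt).comp_hasDerivAt t h2
  exact (h3 : HasDerivAt f v t)

lemma proj_hasDerivAt (i : Fin 3) (f : ℝ → EuclideanSpace ℝ (Fin 3))
    (v : EuclideanSpace ℝ (Fin 3)) (s : ℝ)
    (h : HasDerivAt f v s) : HasDerivAt (fun t => f t i) (v i) s := by
  have := (EuclideanSpace.proj i (𝕜 := ℝ)).hasFDerivAt.comp_hasDerivAt s h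
  exact this

/-- a function constant on `Icc (-L) L` has vanishing (two-sided) derivative there. -/
lemma deriv_zero_of_const_on {L : ℝ} (hL : 0 < L) {f : ℝ → ℝ} {c d s : ℝ}
    (hs : s ∈ Icc (-L) L) (hf : HasDerivAt f d s) (hconst : ∀ t ∈ Icc (-L) L, f t = c) :
    d = 0 := by
  have hu : UniqueDiffWithinAt ℝ (Icc (-L) L) s := uniqueDiffOn_Icc (by linarith) s hs
  have h1 : HasDerivWithinAt f d (Icc (-L) L) s := hf.hasDerivWithinAt
  have h2 : HasDerivWithinAt f 0 (Icc (-L) L) s :=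
    (hasDerivWithinAt_const s _ c).congr hconst (hconst s hs)
  exact (h1.derivWithin hu).symm.trans (h2.derivWithin hu)

/-- The geodesic curvature of the parallel curve `β = α cos λ + N_α sin λ`, computed as
`⟨β'', N_β⟩ / |β'|²` with `N_β = α sin λ − N_α cos λ`, equals
`−(sin λ + κ cos λ)/(cos λ − κ sin λ)`, which is positive when `0 ≤ κ < −tan λ`. -/
theorem parallel_curve_curvature (L lam : ℝ) (hL : 0 < L)
    (hlam : lam ∈ Ioo (π / 2) π)
    (α α' α'' : ℝ → EuclideanSpace ℝ (Fin 3))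
    (hα : ∀ s ∈ Icc (-L) L, HasDerivAt α (α' s) s)
    (hα' : ∀ s ∈ Icc (-L) L, HasDerivAt α' (α'' s) s)
    (hsphere : ∀ s ∈ Icc (-L) L, ⟪α s, α s⟫ = 1)
    (hunit : ∀ s ∈ Icc (-L) L, ⟪α' s, α' s⟫ = 1)
    (N : ℝ → EuclideanSpace ℝ (Fin 3)) (hN : ∀ s, N s = cross3 (α s) (α' s))
    (κ : ℝ → ℝ) (hκ : ∀ s, κ s = ⟪α'' s, N s⟫)
    (hκrange : ∀ s ∈ Icc (-L) L, 0 ≤ κ s ∧ κ s < -Real.tan lam)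
    (β β' β'' : ℝ → EuclideanSpace ℝ (Fin 3))
    (hβ : ∀ s, β s = Real.cos lam • α s + Real.sin lam • N s)
    (hβ' : ∀ s ∈ Icc (-L) L, HasDerivAt β (β' s) s)
    (hβ'' : ∀ s ∈ Icc (-L) L, HasDerivAt β' (β'' s) s)
    (Nβ : ℝ → EuclideanSpace ℝ (Fin 3))
    (hNβ : ∀ s, Nβ s = Real.sin lam • α s - Real.cos lam • N s) :
    ∀ s ∈ Icc (-L) L,
      ⟪β'' s, Nβ s⟫ / ‖β' s‖ ^ 2
        = -(Real.sin lam + κ s * Real.cos lam) / (Real.cos lam - κ s * Real.sin lam) ∧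
      0 < -(Real.sin lam + κ s * Real.cos lam) / (Real.cos lam - κ s * Real.sin lam) := by
  -- basic trigonometric facts
  have hpi := Real.pi_pos
  have hsin : 0 < Real.sin lam :=
    Real.sin_pos_of_pos_of_lt_pi (by linarith [hlam.1]) hlam.2
  have hcos : Real.cos lam < 0 :=
    Real.cos_neg_of_pi_div_two_lt_of_lt hlam.1 (by linarith [hlam.2])
  -- first-order identities from constancy of the inner products
  have hav : ∀ t ∈ Icc (-L) L, ⟪α t, α' t⟫ = 0 := by
    intro t ht
    have hd := (hα t ht).inner ℝ (hα t ht)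
    have h0 := deriv_zero_of_const_on hL ht hd hsphere
    have := real_inner_comm (α t) (α' t)
    linarith [h0, this]
  have hvw : ∀ t ∈ Icc (-L) L, ⟪α' t, α'' t⟫ = 0 := by
    intro t ht
    have hd := (hα' t ht).inner ℝ (hα' t ht)
    have h0 := deriv_zero_of_const_on hL ht hd hunit
    have := real_inner_comm (α' t) (α'' t)
    linarith [h0, this]
  have haw : ∀ t ∈ Icc (-L) L, ⟪α t, α'' t⟫ = -1 := by
    intro t ht
    have hd := (hα t ht).inner ℝ (hα' t ht)
    have h0 := deriv_zero_of_const_on hL ht hd hav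
    have h1 := hunit t ht
    have := real_inner_comm (α t) (α'' t)
    -- hd value : ⟪α t, α'' t⟫ + ⟪α' t, α' t⟫ = 0
    linarith [h0, h1]
  -- derivative of N
  have hNd : ∀ t ∈ Icc (-L) L, HasDerivAt N (cross3 (α t) (α'' t)) t := by
    intro t ht
    apply build_hasDerivAt
    intro i
    have hai : ∀ j : Fin 3, HasDerivAt (fun r => α r j) (α' t j) t :=
      fun j => proj_hasDerivAt j α (α' t) t (hα t ht)
    have hvi : ∀ j : Fin 3, HasDerivAt (fun r => α' r j) (α'' t j) t :=
      fun j => proj_hasDerivAt j α' (α'' t) t (hα' t ht)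
    fin_cases i
    · have h := ((hai 1).mul (hvi 2)).sub ((hai 2).mul (hvi 1))
      have e : (fun r => N r (0 : Fin 3)) = (fun r => α r 1 * α' r 2 - α r 2 * α' r 1) := by
        funext r; rw [hN, cross3_zero]
      show HasDerivAt (fun r => N r (0 : Fin 3)) (cross3 (α t) (α'' t) (0 : Fin 3)) t
      rw [e, cross3_zero]
      exact h.congr_deriv (by ring)
    · have h := ((hai 2).mul (hvi 0)).sub ((hai 0).mul (hvi 2))
      have e : (fun r => N r (1 : Fin 3)) = (fun r => α r 2 * α' r 0 - α r 0 * α' r 2) := by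
        funext r; rw [hN, cross3_one]
      show HasDerivAt (fun r => N r (1 : Fin 3)) (cross3 (α t) (α'' t) (1 : Fin 3)) t
      rw [e, cross3_one]
      exact h.congr_deriv (by ring)
    · have h := ((hai 0).mul (hvi 1)).sub ((hai 1).mul (hvi 0))
      have e : (fun r => N r (2 : Fin 3)) = (fun r => α r 0 * α' r 1 - α r 1 * α' r 0) := by
        funext r; rw [hN, cross3_two]
      show HasDerivAt (fun r => N r (2 : Fin 3)) (cross3 (α t) (α'' t) (2 : Fin 3)) t
      rw [e, cross3_two]
      exact h.congr_deriv (by ring)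
  -- value of β'
  have hβval : ∀ t ∈ Icc (-L) L, β' t = Real.cos lam • α' t + Real.sin lam • cross3 (α t) (α'' t) := by
    intro t ht
    have h1 : HasDerivAt (fun r => Real.cos lam • α r + Real.sin lam • N r)
        (Real.cos lam • α' t + Real.sin lam • cross3 (α t) (α'' t)) t :=
      ((hα t ht).const_smul (Real.cos lam)).add ((hNd t ht).const_smul (Real.sin lam))
    have h2 : HasDerivAt β (Real.cos lam • α' t + Real.sin lam • cross3 (α t) (α'' t)) t := by
      have e : β = fun r => Real.cos lam • α r + Real.sin lam • N r := funext fun r => hβ r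
      rw [e]; exact h1
    exact (hβ' t ht).unique h2
  -- the cross3 (α t) (α'' t) term
  have hDval : ∀ t ∈ Icc (-L) L, cross3 (α t) (α'' t) = (-(κ t)) • α' t := by
    intro t ht
    have h := key (α t) (α' t) (α'' t) (hsphere t ht) (hunit t ht) (hav t ht)
      (hvw t ht) (haw t ht)
    rw [h, hκ, hN, real_inner_comm]
  have hβval' : ∀ t ∈ Icc (-L) L,
      β' t = (Real.cos lam - κ t * Real.sin lam) • α' t := by
    intro t ht
    rw [hβval t ht, hDval t ht, smul_smul]
    rw [← add_smul]
    congr 1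
    ring
  -- now fix s
  intro s hs
  have hvv := hunit s hs
  set c := Real.cos lam - κ s * Real.sin lam with hc
  set k2 := Real.sin lam + κ s * Real.cos lam with hk2
  -- sign facts
  have hκ0 := (hκrange s hs).1
  have hκtan := (hκrange s hs).2
  have hcne : Real.cos lam ≠ 0 := ne_of_lt hcos
  have hk2pos : 0 < k2 := by
    have h1 : κ s * Real.cos lam > -Real.tan lam * Real.cos lam :=
      mul_lt_mul_of_neg_right hκtan hcos
    have h2 : Real.tan lam * Real.cos lam = Real.sin lam := Real.tan_mul_cos hcne
    rw [hk2]
    nlinarith [h1, h2]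
  have hcneg : c < 0 := by
    rw [hc]
    nlinarith [mul_nonneg hκ0 hsin.le]
  have hcne0 : c ≠ 0 := ne_of_lt hcneg
  -- derivative of Nβ
  have hNβd : HasDerivAt Nβ (Real.sin lam • α' s - Real.cos lam • cross3 (α s) (α'' s)) s := by
    have h1 : HasDerivAt (fun r => Real.sin lam • α r - Real.cos lam • N r)
        (Real.sin lam • α' s - Real.cos lam • cross3 (α s) (α'' s)) s :=
      ((hα s hs).const_smul (Real.sin lam)).sub ((hNd s hs).const_smul (Real.cos lam))
    have e : Nβ = fun r => Real.sin lam • α r - Real.cos lam • N r := funext fun r => hNβ r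
    rw [e]; exact h1
  -- ⟪β' r, Nβ r⟫ vanishes on Icc
  have hg0 : ∀ t ∈ Icc (-L) L, ⟪β' t, Nβ t⟫ = 0 := by
    intro t ht
    rw [hβval' t ht, hNβ t, hN t, real_inner_smul_left, inner_sub_right,
      real_inner_smul_right, real_inner_smul_right, real_inner_comm (α t) (α' t),
      hav t ht, real_inner_comm (cross3 (α t) (α' t)) (α' t), cross3_inner_right]
    ring
  -- derivative of the vanishing function
  have hgd := (hβ'' s hs).inner ℝ hNβd
  have h0 := deriv_zero_of_const_on hL hs hgd hg0
  -- h0 : ⟪β' s, E⟫ + ⟪β'' s, Nβ s⟫ = 0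
  have hE : Real.sin lam • α' s - Real.cos lam • cross3 (α s) (α'' s) = k2 • α' s := by
    rw [hDval s hs, smul_smul, ← sub_smul]
    congr 1
    rw [hk2]; ring
  have hβ'Nβ' : ⟪β' s, Real.sin lam • α' s - Real.cos lam • cross3 (α s) (α'' s)⟫ = c * k2 := by
    rw [hE, hβval' s hs, real_inner_smul_left, real_inner_smul_right, hvv]
    ring
  have hinner : ⟪β'' s, Nβ s⟫ = -(c * k2) := by
    rw [hβ'Nβ'] at h0
    linarith [h0]
  have hnorm : ‖β' s‖ ^ 2 = c ^ 2 := by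
    have h1 : ‖β' s‖ ^ 2 = ⟪β' s, β' s⟫ := (real_inner_self_eq_norm_sq _).symm
    rw [h1, hβval' s hs, real_inner_smul_left, real_inner_smul_right, hvv, hc]; ring
  constructor
  · rw [hinner, hnorm]
    field_simp
  · exact div_pos_of_neg_of_neg (by linarith) hcneg
end
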